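/- For every t ≥ 3 there exists a constant C such that for all sufficiently large N there is a set B ⊆ [N] with |B| ≥ N / exp(C·√(log N)) containing no nontrivial solution to y_1 + ⋯ + y_{t-1} = (t-1)·y_t (where a solution with y_1,…,y_t ∈ B is trivial iff y_1 = ⋯ = y_t). -/

import Mathlib

open Finset Real

private lemma behrend_map_lt_pow {D : ℕ} (hD : 0 < D) : ∀ {n : ℕ} (x : Fin n → ℕ),
    (∀ i, x i < D) → Behrend.map D x < D ^ n := by
  intro n
  induction n with
  | zero => intro x hx; simpa using hD
  | succ n ih =>
    intro x hx
    rw [Behrend.map_succ']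
    have h1 := ih (x ∘ Fin.succ) fun i => hx _
    have h0 := hx 0
    have hle : Behrend.map D (x ∘ Fin.succ) * D ≤ (D ^ n - 1) * D :=
      Nat.mul_le_mul_right _ (Nat.le_sub_one_of_lt h1)
    have hDD : D ≤ D ^ n * D := Nat.le_mul_of_pos_left D (pow_pos hD n)
    have hsub : (D ^ n - 1) * D = D ^ n * D - D := by
      rw [Nat.sub_mul, one_mul]
    rw [pow_succ]
    omega

set_option maxHeartbeats 2000000 in
/-- Behrend-type construction: for every t ≥ 3 there is a constant C such that
for all large N there is B ⊆ [N] with |B| ≥ N / exp(C·√(log N)) having no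
nontrivial solution to y_1 + ⋯ + y_{t-1} = (t-1)·y_t. -/
theorem stmt_11 (t : ℕ) (ht : 3 ≤ t) :
    ∃ C : ℝ, ∃ N₀ : ℕ, ∀ N ≥ N₀, ∃ B : Finset ℕ,
      B ⊆ Finset.Icc 1 N ∧
      (N : ℝ) / Real.exp (C * Real.sqrt (Real.log N)) ≤ B.card ∧
      ∀ y : ℕ → ℕ, (∀ i < t, y i ∈ B) →
        (∑ i ∈ Finset.range (t - 1), y i) = (t - 1) * y (t - 1) →
        ∀ i < t, ∀ j < t, y i = y j := by
  obtain ⟨m, rfl⟩ : ∃ m, t = m + 1 := ⟨t - 1, by omega⟩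
  have hm : 2 ≤ m := by omega
  have hm2 : (2:ℝ) ≤ (m:ℝ) := by exact_mod_cast hm
  have hm0 : (0:ℝ) < m := by linarith
  set M : ℝ := 2 * m with hM
  have hM4 : (4:ℝ) ≤ M := by rw [hM]; linarith
  have hM0 : (0:ℝ) < M := by linarith
  have hlogM0 : (0:ℝ) ≤ Real.log M := Real.log_nonneg (by linarith)
  refine ⟨3 + 2 * Real.log M, ⌈Real.exp (max 1 ((2 * Real.log M)^2))⌉₊ + 1, fun N hN => ?_⟩
  set K : ℝ := max 1 ((2 * Real.log M)^2) with hK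
  have hNK : Real.exp K ≤ N := by
    have h1 : (⌈Real.exp K⌉₊ : ℝ) ≤ N := by
      exact_mod_cast le_trans (Nat.le_succ _) hN
    exact (Nat.le_ceil _).trans h1
  have hN0 : (0:ℝ) < N := lt_of_lt_of_le (Real.exp_pos K) hNK
  set L : ℝ := Real.log N with hL
  have hKL : K ≤ L := by
    have := Real.log_le_log (Real.exp_pos K) hNK
    rwa [Real.log_exp] at this
  have hL1 : 1 ≤ L := le_trans (le_max_left _ _) hKL
  have hL0 : (0:ℝ) < L := by linarith
  have hsL1 : 1 ≤ Real.sqrt L := by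
    rw [show (1:ℝ) = Real.sqrt 1 by simp]
    exact Real.sqrt_le_sqrt hL1
  have hsL0 : (0:ℝ) < Real.sqrt L := by linarith
  have hLM : 2 * Real.log M ≤ Real.sqrt L :=
    (Real.le_sqrt (by linarith) (le_of_lt hL0)).2 (le_trans (le_max_right _ _) hKL)
  set n : ℕ := ⌈Real.sqrt L⌉₊ with hn
  have hnl : Real.sqrt L ≤ (n:ℝ) := by rw [hn]; exact Nat.le_ceil _
  have hn0 : (0:ℝ) < n := lt_of_lt_of_le hsL0 hnl
  have hn1 : 1 ≤ n := by exact_mod_cast Nat.one_le_iff_ne_zero.2 (by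
    intro h; rw [h] at hn0; simp at hn0)
  have hnu : (n:ℝ) ≤ 2 * Real.sqrt L := by
    have h1 : ((⌈Real.sqrt L⌉₊ : ℕ) : ℝ) < Real.sqrt L + 1 :=
      Nat.ceil_lt_add_one (le_of_lt hsL0)
    rw [hn]
    linarith
  set X : ℝ := (N:ℝ) ^ ((n:ℝ)⁻¹) with hX
  have hX0 : (0:ℝ) < X := Real.rpow_pos_of_pos hN0 _
  have hXn : X ^ n = (N:ℝ) := Real.rpow_inv_natCast_pow (le_of_lt hN0) (by omega)
  have hlogX : Real.log X = L / n := by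
    rw [hX, Real.log_rpow hN0, ← hL]; ring
  have hlogXle : Real.log X ≤ Real.sqrt L := by
    rw [hlogX, div_le_iff₀ hn0]
    have h2 : Real.sqrt L * Real.sqrt L = L := Real.mul_self_sqrt (le_of_lt hL0)
    nlinarith
  have hlogXge : Real.sqrt L / 2 ≤ Real.log X := by
    rw [hlogX, le_div_iff₀ hn0]
    have h2 : Real.sqrt L * Real.sqrt L = L := Real.mul_self_sqrt (le_of_lt hL0)
    nlinarith
  have hMX : M ≤ X := by
    calc M = Real.exp (Real.log M) := (Real.exp_log hM0).symm
      _ ≤ Real.exp (Real.log X) := Real.exp_le_exp.2 (by linarith)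
      _ = X := Real.exp_log hX0
  set d : ℕ := ⌊X / m⌋₊ with hd
  have hdu : (d:ℝ) ≤ X / m := by rw [hd]; exact Nat.floor_le (by positivity)
  have hXmM : X / (m:ℝ) = 2 * (X / M) := by
    rw [hM]; field_simp
  have hXM1 : 1 ≤ X / M := (one_le_div hM0).2 hMX
  have hdl : X / M ≤ (d:ℝ) := by
    have h2 : X / (m:ℝ) - 1 < (d:ℝ) := by rw [hd]; exact_mod_cast Nat.sub_one_lt_floor _
    rw [hXmM] at h2
    linarith
  have hd1 : 1 ≤ d := by
    have h1 : (1:ℝ) ≤ (d:ℝ) := le_trans hXM1 hdl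
    exact_mod_cast h1
  have hd0R : (0:ℝ) < (d:ℝ) := by
    have h1 : (1:ℝ) ≤ (d:ℝ) := by exact_mod_cast hd1
    linarith
  set D : ℕ := m * d with hD
  have hD0 : 0 < D := by rw [hD]; positivity
  have hdD : d ≤ D := by rw [hD]; exact Nat.le_mul_of_pos_left d (by omega)
  have hDX : (D:ℝ) ≤ X := by
    have h1 : (D:ℝ) = (m:ℝ) * d := by rw [hD]; push_cast; ring
    rw [h1]
    calc (m:ℝ) * d ≤ (m:ℝ) * (X / m) := by nlinarith
      _ = X := by rw [mul_comm]; exact div_mul_cancel₀ X hm0.ne'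
  have hDN : D ^ n ≤ N := by
    have h1 : ((D:ℝ)) ^ n ≤ (N:ℝ) := by
      rw [← hXn]; exact pow_le_pow_left₀ (Nat.cast_nonneg _) hDX n
    exact_mod_cast h1
  clear_value M K L n X d D
  obtain ⟨k, hk⟩ := Behrend.exists_large_sphere n d
  have hdig : ∀ v ∈ Behrend.sphere n d k, ∀ i, v i < D := fun v hv i =>
    lt_of_lt_of_le (Behrend.mem_box.1 (Behrend.sphere_subset_box hv) i) hdD
  refine ⟨(Behrend.sphere n d k).image (fun v => Behrend.map D v + 1), ?_, ?_, ?_⟩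
  · -- subset of Icc 1 N
    intro b hb
    obtain ⟨v, hv, rfl⟩ := Finset.mem_image.1 hb
    rw [Finset.mem_Icc]
    refine ⟨by omega, ?_⟩
    have h1 := behrend_map_lt_pow hD0 v (hdig v hv)
    omega
  · -- cardinality
    have hinj : Set.InjOn (fun v => Behrend.map D v + 1)
        (↑(Behrend.sphere n d k) : Set (Fin n → ℕ)) := by
      intro a ha b hb h
      simp only at h
      have h' : Behrend.map D a = Behrend.map D b := by omega
      exact Behrend.map_injOn (hdig a (Finset.mem_coe.1 ha)) (hdig b (Finset.mem_coe.1 hb)) h'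
    rw [Finset.card_image_of_injOn hinj]
    have hdn : (N:ℝ) / M ^ n ≤ (d:ℝ)^n := by
      have h1 : (X / M)^n ≤ (d:ℝ)^n := pow_le_pow_left₀ (by positivity) hdl n
      rwa [div_pow, hXn] at h1
    have e1 : (n:ℝ) ≤ Real.exp (Real.sqrt L) := by
      have ha := Real.add_one_le_exp (Real.sqrt L / 2)
      have hh : Real.exp (Real.sqrt L / 2) * Real.exp (Real.sqrt L / 2)
          = Real.exp (Real.sqrt L) := by
        rw [← Real.exp_add]; congr 1; ring
      nlinarith [sq_nonneg (Real.sqrt L / 2 - 1), Real.exp_pos (Real.sqrt L / 2)]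
    have e2 : (d:ℝ)^2 ≤ Real.exp (2 * Real.sqrt L) := by
      have h1 : (d:ℝ) ≤ X := le_trans hdu (div_le_self (le_of_lt hX0) (by linarith))
      have h2 : X^2 = Real.exp (2 * Real.log X) := by
        rw [show (2:ℝ) * Real.log X = ((2:ℕ):ℝ) * Real.log X by norm_num,
          Real.exp_nat_mul, Real.exp_log hX0]
      calc (d:ℝ)^2 ≤ X^2 := pow_le_pow_left₀ (Nat.cast_nonneg _) h1 2
        _ = Real.exp (2 * Real.log X) := h2
        _ ≤ Real.exp (2 * Real.sqrt L) := Real.exp_le_exp.2 (by linarith)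
    have e3 : M^n ≤ Real.exp (2 * Real.sqrt L * Real.log M) := by
      have h1 : M^n = Real.exp ((n:ℝ) * Real.log M) := by
        rw [Real.exp_nat_mul, Real.exp_log hM0]
      rw [h1]
      exact Real.exp_le_exp.2 (by nlinarith)
    have hbig : (n:ℝ) * (d:ℝ)^2 * M^n ≤ Real.exp ((3 + 2*Real.log M) * Real.sqrt L) := by
      calc (n:ℝ) * (d:ℝ)^2 * M^n
          ≤ Real.exp (Real.sqrt L) * Real.exp (2*Real.sqrt L)
            * Real.exp (2*Real.sqrt L*Real.log M) := by
            apply mul_le_mul (mul_le_mul e1 e2 (by positivity) (Real.exp_pos _).le) e3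
              (by positivity) (by positivity)
        _ = Real.exp ((3 + 2*Real.log M) * Real.sqrt L) := by
            rw [← Real.exp_add, ← Real.exp_add]; congr 1; ring
    have hpos : (0:ℝ) < (n:ℝ) * (d:ℝ)^2 * M^n :=
      mul_pos (mul_pos hn0 (by positivity)) (pow_pos hM0 n)
    push_cast at hk
    calc (N:ℝ) / Real.exp ((3 + 2 * Real.log M) * Real.sqrt L)
        ≤ (N:ℝ) / ((n:ℝ) * (d:ℝ)^2 * M^n) := by gcongr
      _ = ((N:ℝ) / M^n) / ((n:ℝ) * (d:ℝ)^2) := by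
          rw [div_div, mul_comm]
      _ ≤ (d:ℝ)^n / ((n:ℝ) * (d:ℝ)^2) := by gcongr
      _ ≤ ((Behrend.sphere n d k).card : ℝ) := hk
  · -- no nontrivial solutions
    intro y hy heq i hi j hj
    simp only [Nat.add_sub_cancel] at heq
    have hy' : ∀ i < m + 1, ∃ v, v ∈ Behrend.sphere n d k ∧ Behrend.map D v + 1 = y i := by
      intro i hi'
      obtain ⟨v, hv, he⟩ := Finset.mem_image.1 (hy i hi')
      exact ⟨v, hv, he⟩
    choose! v hv hvy using hy'
    have hbox : ∀ i < m + 1, ∀ j', v i j' < d := fun i hi' j' =>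
      Behrend.mem_box.1 (Behrend.sphere_subset_box (hv i hi')) j'
    have hsph : ∀ i < m + 1, ∑ j' : Fin n, (v i j') ^ 2 = k := fun i hi' =>
      (Finset.mem_filter.1 (hv i hi')).2
    suffices hsuff : ∀ i < m + 1, y i = y m by rw [hsuff i hi, hsuff j hj]
    have heq' : ∑ i ∈ Finset.range m, Behrend.map D (v i) = m * Behrend.map D (v m) := by
      have h1 : ∑ i ∈ Finset.range m, (Behrend.map D (v i) + 1)
          = m * (Behrend.map D (v m) + 1) := by
        calc ∑ i ∈ Finset.range m, (Behrend.map D (v i) + 1)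
            = ∑ i ∈ Finset.range m, y i := Finset.sum_congr rfl fun i hi' =>
              hvy i (by simp at hi'; omega)
          _ = m * y m := heq
          _ = m * (Behrend.map D (v m) + 1) := by rw [hvy m (by omega)]
      rw [Finset.sum_add_distrib, Finset.sum_const, Finset.card_range, smul_eq_mul, mul_one,
        Nat.mul_add, Nat.mul_one] at h1
      omega
    have hsum : (∑ i ∈ Finset.range m, v i) = m • v m := by
      have hmem1 : (∑ i ∈ Finset.range m, v i) ∈ {x : Fin n → ℕ | ∀ i, x i < D} := by
        intro j'
        rw [Finset.sum_apply]
        have h1 : ∑ i ∈ Finset.range m, v i j' ≤ m * (d - 1) := by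
          calc ∑ i ∈ Finset.range m, v i j'
              ≤ ∑ _i ∈ Finset.range m, (d - 1) := Finset.sum_le_sum fun i hi' =>
                Nat.le_sub_one_of_lt (hbox i (by simp at hi'; omega) j')
            _ = m * (d - 1) := by rw [Finset.sum_const, Finset.card_range, smul_eq_mul]
        have h2 : m * (d - 1) < m * d := mul_lt_mul_of_pos_left (by omega) (by omega)
        rw [hD]
        omega
      have hmem2 : (m • v m) ∈ {x : Fin n → ℕ | ∀ i, x i < D} := by
        intro j'
        rw [Pi.smul_apply, smul_eq_mul]
        have h1 : m * v m j' ≤ m * (d - 1) :=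
          Nat.mul_le_mul_left _ (Nat.le_sub_one_of_lt (hbox m (by omega) j'))
        have h2 : m * (d - 1) < m * d := mul_lt_mul_of_pos_left (by omega) (by omega)
        rw [hD]
        omega
      refine Behrend.map_injOn hmem1 hmem2 ?_
      rw [map_sum, map_nsmul, smul_eq_mul]
      exact heq'
    have hsumj : ∀ j' : Fin n, (∑ i ∈ Finset.range m, (v i j' : ℤ)) = m * (v m j' : ℤ) := by
      intro j'
      have h1 := congrFun hsum j'
      rw [Finset.sum_apply, Pi.smul_apply, smul_eq_mul] at h1
      exact_mod_cast h1
    have hsphZ : ∀ i < m + 1, ∑ j' : Fin n, ((v i j' : ℤ)) ^ 2 = (k:ℤ) := by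
      intro i hi'
      exact_mod_cast hsph i hi'
    have hc : ∑ i ∈ Finset.range m, ∑ j' : Fin n, ((v i j' : ℤ) * (v m j' : ℤ))
        = (m:ℤ) * k := by
      rw [Finset.sum_comm]
      have h1 : ∀ j' : Fin n, ∑ i ∈ Finset.range m, ((v i j' : ℤ) * v m j')
          = (m:ℤ) * (v m j' : ℤ)^2 := by
        intro j'
        rw [← Finset.sum_mul, hsumj j']
        ring
      rw [Finset.sum_congr rfl fun j' _ => h1 j', ← Finset.mul_sum, hsphZ m (by omega)]
    have hz : ∑ i ∈ Finset.range m, ∑ j' : Fin n, ((v i j' : ℤ) - v m j')^2 = 0 := by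
      have expand : ∀ i ∈ Finset.range m, ∑ j' : Fin n, ((v i j' : ℤ) - v m j')^2
          = 2*(k:ℤ) - 2 * ∑ j' : Fin n, ((v i j' : ℤ) * v m j') := by
        intro i hi'
        have h1 := hsphZ i (by simp at hi'; omega)
        have h2 := hsphZ m (by omega)
        calc ∑ j' : Fin n, ((v i j' : ℤ) - v m j')^2
            = ∑ j' : Fin n, ((v i j' : ℤ)^2 + (v m j' : ℤ)^2 - 2*((v i j' : ℤ) * v m j')) :=
              Finset.sum_congr rfl fun _ _ => by ring
          _ = (∑ j' : Fin n, (v i j' : ℤ)^2) + (∑ j' : Fin n, (v m j' : ℤ)^2)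
              - 2 * ∑ j' : Fin n, ((v i j' : ℤ) * v m j') := by
              rw [Finset.sum_sub_distrib, Finset.sum_add_distrib, Finset.mul_sum]
          _ = 2*(k:ℤ) - 2 * ∑ j' : Fin n, ((v i j' : ℤ) * v m j') := by rw [h1, h2]; ring
      calc ∑ i ∈ Finset.range m, ∑ j' : Fin n, ((v i j' : ℤ) - v m j')^2
          = ∑ i ∈ Finset.range m,
              (2*(k:ℤ) - 2 * ∑ j' : Fin n, ((v i j' : ℤ) * v m j')) :=
            Finset.sum_congr rfl expand
        _ = (m:ℤ) * (2*k) - 2 * ∑ i ∈ Finset.range m,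
              ∑ j' : Fin n, ((v i j' : ℤ) * v m j') := by
            rw [Finset.sum_sub_distrib, Finset.sum_const, Finset.card_range, ← Finset.mul_sum]
            push_cast
            ring
        _ = 0 := by rw [hc]; ring
    have hveq : ∀ i ∈ Finset.range m, v i = v m := by
      intro i hi'
      have h1 := (Finset.sum_eq_zero_iff_of_nonneg fun i _ =>
        Finset.sum_nonneg fun j' _ => sq_nonneg _).1 hz i hi'
      funext j'
      have h2 := (Finset.sum_eq_zero_iff_of_nonneg fun j' _ => sq_nonneg _).1 h1 j'
        (Finset.mem_univ _)
      have h3 : (v i j' : ℤ) = v m j' := by nlinarith [sq_nonneg ((v i j' : ℤ) - v m j')]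
      exact_mod_cast h3
    intro i hi'
    rcases Nat.lt_or_ge i m with h | h
    · rw [← hvy i (by omega), ← hvy m (by omega), hveq i (Finset.mem_range.2 h)]
    · have h4 : i = m := by omega
      rw [h4]
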